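/- Let X ~ N(θ, σ²) with |θ| ≥ a > 0 and suppose a/σ ≥ Φ⁻¹((δ+1)/2) − Φ⁻¹(α'/(2s)). Then P(|X| ≤ max(σΦ⁻¹(α'/(2s)) + a, 0)) ≤ α'/s. -/

import Mathlib

open MeasureTheory ProbabilityTheory Real Set

/-- The standard normal CDF. -/
noncomputable def Phi (y : ℝ) : ℝ := ((gaussianReal 0 1) (Set.Iic y)).toReal

/-- The standard normal quantile function (inverse CDF). -/
noncomputable def PhiInv : ℝ → ℝ := Function.invFun Phi

lemma phi_eq_integral (y : ℝ) : Phi y = ∫ x in Iic y, gaussianPDFReal 0 1 x := by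
  rw [Phi, gaussianReal_apply_eq_integral 0 one_ne_zero,
    ENNReal.toReal_ofReal (integral_nonneg fun x => gaussianPDFReal_nonneg 0 1 x)]

lemma phi_mono : Monotone Phi := fun _ _ hxy =>
  ENNReal.toReal_mono (measure_ne_top _ _) (measure_mono (Iic_subset_Iic.2 hxy))

lemma phi_continuous : Continuous Phi := by
  have hint : Integrable (gaussianPDFReal 0 1) := integrable_gaussianPDFReal 0 1
  have h : Phi = fun y => Phi 0 + ∫ x in (0:ℝ)..y, gaussianPDFReal 0 1 x := by
    funext y
    rw [phi_eq_integral, phi_eq_integral,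
      ← intervalIntegral.integral_Iic_sub_Iic hint.integrableOn hint.integrableOn]
    ring
  rw [h]
  exact continuous_const.add (hint.continuous_primitive 0)

lemma phi_eq_cdf : Phi = cdf (gaussianReal 0 1) := by
  funext y
  rw [Phi, cdf_eq_real, measureReal_def]

lemma phi_surj {t : ℝ} (h0 : 0 < t) (h1 : t < 1) : ∃ y, Phi y = t := by
  have hbot : Filter.Tendsto Phi Filter.atBot (nhds 0) := by
    rw [phi_eq_cdf]; exact tendsto_cdf_atBot _
  have htop : Filter.Tendsto Phi Filter.atTop (nhds 1) := by
    rw [phi_eq_cdf]; exact tendsto_cdf_atTop _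
  obtain ⟨y₁, hy₁⟩ := (hbot.eventually_lt_const h0).exists
  obtain ⟨y₂, hy₂⟩ := (htop.eventually_const_lt h1).exists
  have ht : t ∈ uIcc (Phi y₁) (Phi y₂) := by
    rw [uIcc_of_le (le_trans hy₁.le hy₂.le)]
    exact ⟨hy₁.le, hy₂.le⟩
  obtain ⟨y, _, hy⟩ := intermediate_value_uIcc phi_continuous.continuousOn ht
  exact ⟨y, hy⟩

lemma phi_phiInv {t : ℝ} (h0 : 0 < t) (h1 : t < 1) : Phi (PhiInv t) = t :=
  Function.invFun_eq (phi_surj h0 h1)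

lemma gauss_eq_map {σ : ℝ} (hσ : 0 < σ) (θ : ℝ) :
    gaussianReal θ ((σ ^ 2).toNNReal)
      = ((gaussianReal 0 1).map (fun x => σ * x)).map (fun x => x + θ) := by
  have h1 : (gaussianReal 0 1).map (fun x => σ * x) = gaussianReal 0 ((σ ^ 2).toNNReal) := by
    have := gaussianReal_map_const_mul (μ := 0) (v := 1) σ
    simp only [mul_zero, mul_one] at this
    rw [show (fun x => σ * x) = (σ * ·) from rfl, this]
    congr 1
    ext
    simp [Real.coe_toNNReal _ (sq_nonneg σ)]
  have h2 := gaussianReal_map_add_const (μ := 0) (v := (σ ^ 2).toNNReal) θ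
  rw [h1, show (fun x => x + θ) = (· + θ) from rfl, h2, zero_add]

lemma gauss_Iic {σ : ℝ} (hσ : 0 < σ) (θ c : ℝ) :
    gaussianReal θ ((σ ^ 2).toNNReal) (Iic c) = (gaussianReal 0 1) (Iic ((c - θ) / σ)) := by
  rw [gauss_eq_map hσ θ,
    Measure.map_apply (measurable_add_const θ) measurableSet_Iic,
    show (fun x => x + θ) ⁻¹' Iic c = Iic (c - θ) by ext x; simp [le_sub_iff_add_le],
    Measure.map_apply (measurable_const_mul σ) measurableSet_Iic]
  congr 1
  ext x
  simp only [mem_preimage, mem_Iic]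
  rw [le_div_iff₀ hσ, mul_comm]

lemma gauss_neg (θ : ℝ) (v : NNReal) :
    (gaussianReal θ v).map (fun x : ℝ => -x) = gaussianReal (-θ) v := by
  rw [show (fun x : ℝ => -x) = ((-1 : ℝ) * ·) by funext x; ring,
    gaussianReal_map_const_mul]
  congr 1
  · ring
  · ext
    norm_num

lemma gauss_symm_event (θ : ℝ) (v : NNReal) (m : ℝ) :
    gaussianReal (-θ) v {x : ℝ | |x| ≤ m} = gaussianReal θ v {x : ℝ | |x| ≤ m} := by
  have hmeas : MeasurableSet {x : ℝ | |x| ≤ m} :=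
    measurableSet_le (by fun_prop) measurable_const
  rw [← gauss_neg θ v, Measure.map_apply measurable_neg hmeas]
  congr 1
  ext x
  simp

lemma key_bound (σ a α' : ℝ) (s : ℕ) (hs : 1 ≤ s) (hσ : 0 < σ) (ha : 0 < a)
    (hα'0 : 0 < α') (hα'1 : α' < 1) (θ : ℝ) (hθ : a ≤ θ) :
    ((gaussianReal θ (σ ^ 2).toNNReal)
        {x : ℝ | |x| ≤ max (σ * PhiInv (α' / (2 * s)) + a) 0}).toReal ≤ α' / s := by
  have hs' : (1 : ℝ) ≤ (s : ℝ) := by exact_mod_cast hs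
  set t : ℝ := α' / (2 * s) with htdef
  have ht0 : 0 < t := by positivity
  have ht1 : t < 1 := by
    rw [htdef, div_lt_one (by positivity)]
    nlinarith
  set q : ℝ := PhiInv t with hqdef
  have hPhiq : Phi q = t := phi_phiInv ht0 ht1
  have hts : t ≤ α' / s := by
    rw [htdef, div_le_div_iff₀ (by positivity) (by positivity)]
    nlinarith
  set c : ℝ := σ * q + a with hcdef
  by_cases hc : 0 < c
  · have hmax : max c 0 = c := max_eq_left hc.le
    rw [hmax]
    have hsub : {x : ℝ | |x| ≤ c} ⊆ Iic c := fun x hx => le_trans (le_abs_self x) hx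
    have h1 : ((gaussianReal θ (σ ^ 2).toNNReal) {x : ℝ | |x| ≤ c}).toReal
        ≤ ((gaussianReal θ (σ ^ 2).toNNReal) (Iic c)).toReal :=
      ENNReal.toReal_mono (measure_ne_top _ _) (measure_mono hsub)
    have h2 : ((gaussianReal θ (σ ^ 2).toNNReal) (Iic c)).toReal = Phi ((c - θ) / σ) := by
      rw [gauss_Iic hσ, Phi]
    have h3 : (c - θ) / σ ≤ q := by
      rw [div_le_iff₀ hσ, hcdef]
      nlinarith
    calc ((gaussianReal θ (σ ^ 2).toNNReal) {x : ℝ | |x| ≤ c}).toReal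
        ≤ Phi ((c - θ) / σ) := h2 ▸ h1
      _ ≤ Phi q := phi_mono h3
      _ = t := hPhiq
      _ ≤ α' / s := hts
  · have hmax : max c 0 = 0 := max_eq_right (not_lt.mp hc)
    rw [hmax]
    have hset : {x : ℝ | |x| ≤ (0:ℝ)} = {0} := by
      ext x; simp [abs_nonpos_iff]
    rw [hset]
    have hv : (σ ^ 2).toNNReal ≠ 0 :=
      ne_of_gt (Real.toNNReal_pos.mpr (by positivity))
    have h0 : (gaussianReal θ (σ ^ 2).toNNReal) {(0:ℝ)} = 0 :=
      gaussianReal_absolutelyContinuous θ hv (measure_singleton 0)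
    rw [h0]
    simp only [ENNReal.toReal_zero]
    positivity

/-- For `X ~ N(θ, σ²)` with `|θ| ≥ a > 0` and
`a/σ ≥ Φ⁻¹((δ+1)/2) − Φ⁻¹(α'/(2s))`, we have
`P(|X| ≤ max(σΦ⁻¹(α'/(2s)) + a, 0)) ≤ α'/s`. -/
theorem twosided_miss_bound (θ σ a δ α' : ℝ) (s : ℕ) (hs : 1 ≤ s)
    (hσ : 0 < σ) (ha : 0 < a) (hθ : a ≤ |θ|)
    (hδ0 : 0 < δ) (hδ1 : δ < 1) (hα'0 : 0 < α') (hα'1 : α' < 1)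
    (hsnr : PhiInv ((δ + 1) / 2) - PhiInv (α' / (2 * s)) ≤ a / σ) :
    ((gaussianReal θ (σ ^ 2).toNNReal)
        {x : ℝ | |x| ≤ max (σ * PhiInv (α' / (2 * s)) + a) 0}).toReal ≤ α' / s := by
  rcases abs_cases θ with ⟨h1, _⟩ | ⟨h1, _⟩
  · exact key_bound σ a α' s hs hσ ha hα'0 hα'1 θ (h1 ▸ hθ)
  · have hθ' : a ≤ -θ := h1 ▸ hθ
    have := key_bound σ a α' s hs hσ ha hα'0 hα'1 (-θ) hθ'
    rwa [show (-θ) = -θ from rfl, gauss_symm_event (θ := θ)] at this
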